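/- Let U be a finite set of cardinality u and let n ≤ u. Suppose M : {S ⊆ U : |S| = n} → Σ is a function into a finite set Σ of 'states', and Y : Σ → Set U assigns to each state a 'yes'-set, such that for every S with |S| = n we have Y(M(S)) ⊆ S and |S \ Y(M(S))| ≤ k. Then |Σ| · (Σ_{j=0}^{k} C(u,j)) ≥ C(u,n). -/

import Mathlib

open Finset

/-- Counting core of the static-filter lower bound: if each state's yes-set
satisfies Y(M S) ⊆ S and |S \ Y(M S)| ≤ k for every n-subset S, then
|Σ| · Σ_{j=0}^{k} C(u,j) ≥ C(u,n). -/
theorem stmt3 {α σ : Type*} [Fintype α] [Fintype σ] (u n k : ℕ)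
    (hu : Fintype.card α = u) (hnu : n ≤ u)
    (M : Finset α → σ) (Y : σ → Set α)
    (hY : ∀ S : Finset α, S.card = n → Y (M S) ⊆ ↑S)
    (hk : ∀ S : Finset α, S.card = n → ((↑S : Set α) \ Y (M S)).ncard ≤ k) :
    u.choose n ≤ Fintype.card σ * ∑ j ∈ Finset.range (k + 1), u.choose j := by
  classical
  subst hu
  set f : Finset α → σ × Finset α := fun S => (M S, S \ (Y (M S)).toFinset) with hf
  have hcardeq : ∀ S : Finset α, S.card = n →
      (S \ (Y (M S)).toFinset).card = ((↑S : Set α) \ Y (M S)).ncard := by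
    intro S hS
    rw [← Set.ncard_coe_finset]
    congr 1
    simp [Finset.coe_sdiff]
  have hmaps : ∀ S ∈ Finset.univ.powersetCard n,
      f S ∈ (Finset.univ : Finset σ) ×ˢ
        (Finset.univ.powerset.filter fun T : Finset α => T.card ≤ k) := by
    intro S hS
    have hS' : S.card = n := (Finset.mem_powersetCard_univ).mp hS
    simp only [Finset.mem_product, Finset.mem_univ, true_and, Finset.mem_filter,
      Finset.mem_powerset, hf]
    exact ⟨Finset.subset_univ _, by rw [hcardeq S hS']; exact hk S hS'⟩
  have hinj : Set.InjOn f ↑(Finset.univ.powersetCard n : Finset (Finset α)) := by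
    intro S1 h1 S2 h2 heq
    have h1' : S1.card = n := (Finset.mem_powersetCard_univ).mp h1
    have h2' : S2.card = n := (Finset.mem_powersetCard_univ).mp h2
    have hM : M S1 = M S2 := congrArg Prod.fst heq
    have hD : S1 \ (Y (M S1)).toFinset = S2 \ (Y (M S2)).toFinset :=
      congrArg Prod.snd heq
    have hsub1 : (Y (M S1)).toFinset ⊆ S1 := by
      intro x hx; exact hY S1 h1' (Set.mem_toFinset.mp hx)
    have hsub2 : (Y (M S2)).toFinset ⊆ S2 := by
      intro x hx; exact hY S2 h2' (Set.mem_toFinset.mp hx)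
    calc S1 = (Y (M S1)).toFinset ∪ (S1 \ (Y (M S1)).toFinset) :=
            (Finset.union_sdiff_of_subset hsub1).symm
      _ = (Y (M S2)).toFinset ∪ (S2 \ (Y (M S2)).toFinset) := by
            rw [hM] at hD; rw [hM, hD]
      _ = S2 := Finset.union_sdiff_of_subset hsub2
  have hle := Finset.card_le_card_of_injOn f hmaps hinj
  have hdom : (Finset.univ.powersetCard n : Finset (Finset α)).card =
      (Fintype.card α).choose n := by
    simp [Finset.card_powersetCard]
  have hfil : (Finset.univ.powerset.filter fun T : Finset α => T.card ≤ k) =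
      (Finset.range (k + 1)).biUnion (fun j => Finset.univ.powersetCard j) := by
    ext T
    simp [Finset.mem_biUnion, Finset.mem_powersetCard_univ, Nat.lt_succ_iff]
  have hfilcard : (Finset.univ.powerset.filter fun T : Finset α => T.card ≤ k).card =
      ∑ j ∈ Finset.range (k + 1), (Fintype.card α).choose j := by
    rw [hfil, Finset.card_biUnion]
    · exact Finset.sum_congr rfl fun j _ => by simp [Finset.card_powersetCard]
    · intro i _ j _ hij
      rw [Function.onFun, Finset.disjoint_left]
      intro T hTi hTj
      exact hij ((Finset.mem_powersetCard_univ.mp hTi).symm.trans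
        (Finset.mem_powersetCard_univ.mp hTj))
  rwa [hdom, Finset.card_product, Finset.card_univ, hfilcard] at hle
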